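/- Let G be a split graph whose vertex set is partitioned into a maximum clique K of size ω and an independent set S. If D is a proper k-orientation of G and ℓ is the number of edges between S and K that are oriented toward K in D, then ℓ ≤ kω − ω(ω−1)/2. -/

import Mathlib

open SimpleGraph

/-- An orientation of a simple graph `G`: each edge gets exactly one direction.
`dir u v = true` means the edge `uv` is oriented from `u` toward `v` (head `v`). -/
structure Orient {V : Type*} (G : SimpleGraph V) where
  dir : V → V → Bool
  adj_of_dir : ∀ u v, dir u v = true → G.Adj u v
  dir_iff : ∀ u v, G.Adj u v → (dir u v = true ↔ ¬ dir v u = true)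

/-- The indegree of a vertex in an orientation. -/
def Orient.inDeg {V : Type*} [Fintype V] {G : SimpleGraph V} (D : Orient G) (v : V) : ℕ :=
  (Finset.univ.filter (fun u => D.dir u v = true)).card

/-- An orientation is proper if adjacent vertices have distinct indegrees. -/
def Orient.Proper {V : Type*} [Fintype V] {G : SimpleGraph V} (D : Orient G) : Prop :=
  ∀ u v, G.Adj u v → D.inDeg u ≠ D.inDeg v


/-- Let `G` be a split graph partitioned into a maximum clique `K` of size `ω` and an
independent set. If `D` is a proper `k`-orientation of `G` and `ℓ` is the number of
edges from outside `K` into `K` that are oriented toward `K`, then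
`ℓ ≤ kω - ω(ω-1)/2`. -/
theorem split_arcs_into_max_clique_bound {V : Type*} [Fintype V] [DecidableEq V]
    (G : SimpleGraph V) (K : Finset V) (ω k : ℕ)
    (hclique : G.IsClique (↑K : Set V)) (hcard : K.card = ω)
    (hmaxclique : G.cliqueNum = ω)
    (hindep : ∀ u ∉ K, ∀ v ∉ K, ¬ G.Adj u v)
    (D : Orient G) (hproper : D.Proper) (hk : ∀ v, D.inDeg v ≤ k) :
    ((Finset.univ.filter
        (fun p : V × V => p.1 ∉ K ∧ p.2 ∈ K ∧ D.dir p.1 p.2 = true)).card : ℤ) ≤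
      k * ω - ω * (ω - 1) / 2 := by
  classical
  set ℓS := Finset.univ.filter
      (fun p : V × V => p.1 ∉ K ∧ p.2 ∈ K ∧ D.dir p.1 p.2 = true) with hℓS
  set S1 := Finset.univ.filter
      (fun p : V × V => p.1 ∈ K ∧ p.2 ∈ K ∧ D.dir p.1 p.2 = true) with hS1
  set S2 := Finset.univ.filter
      (fun p : V × V => p.1 ∈ K ∧ p.2 ∈ K ∧ D.dir p.2 p.1 = true) with hS2
  set P := Finset.univ.filter
      (fun p : V × V => p.2 ∈ K ∧ D.dir p.1 p.2 = true) with hP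
  -- P splits as ℓS ⊔ S1
  have hdisj : Disjoint ℓS S1 := by
    rw [Finset.disjoint_left]
    intro p hp hp'
    simp only [hℓS, hS1, Finset.mem_filter] at hp hp'
    exact hp.2.1 hp'.2.1
  have hunion : ℓS ∪ S1 = P := by
    ext p
    simp only [hℓS, hS1, hP, Finset.mem_union, Finset.mem_filter, Finset.mem_univ, true_and]
    by_cases h : p.1 ∈ K <;> tauto
  have hPcard : P.card = ℓS.card + S1.card := by
    rw [← hunion, Finset.card_union_of_disjoint hdisj]
  -- P.card = sum of indegrees over K
  have hPsum : P.card = ∑ v ∈ K, D.inDeg v := by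
    rw [Finset.card_eq_sum_card_fiberwise (f := fun p : V × V => p.2) (t := K)
      (fun p hp => by have hp' : p ∈ P := hp; exact (Finset.mem_filter.mp hp').2.1)]
    refine Finset.sum_congr rfl fun v hv => ?_
    have : P.filter (fun p : V × V => p.2 = v)
        = (Finset.univ.filter fun u => D.dir u v = true).image (fun u => (u, v)) := by
      ext ⟨a, b⟩
      simp only [hP, Finset.mem_filter, Finset.mem_univ, true_and, Finset.mem_image,
        Prod.mk.injEq]
      constructor
      · rintro ⟨⟨hbK, hd⟩, rfl⟩
        exact ⟨a, hd, rfl, rfl⟩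
      · rintro ⟨u, hd, rfl, rfl⟩
        exact ⟨⟨hv, hd⟩, rfl⟩
    rw [this, Finset.card_image_of_injective _ (fun a b h => by simpa using h)]
    rfl
  have hsum_le : ∑ v ∈ K, D.inDeg v ≤ k * ω := by
    calc ∑ v ∈ K, D.inDeg v ≤ ∑ _v ∈ K, k := Finset.sum_le_sum fun v _ => hk v
    _ = K.card * k := by rw [Finset.sum_const, smul_eq_mul]
    _ = k * ω := by rw [hcard, Nat.mul_comm]
  -- S1.card = S2.card via swapping
  have hS12 : S1.card = S2.card := by
    have himg : S2 = S1.image Prod.swap := by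
      ext ⟨a, b⟩
      simp only [hS1, hS2, Finset.mem_filter, Finset.mem_univ, true_and, Finset.mem_image,
        Prod.exists, Prod.swap_prod_mk, Prod.mk.injEq]
      constructor
      · rintro ⟨ha, hb, hd⟩
        exact ⟨b, a, ⟨hb, ha, hd⟩, rfl, rfl⟩
      · rintro ⟨x, y, ⟨hx, hy, hd⟩, rfl, rfl⟩
        exact ⟨hy, hx, hd⟩
    rw [himg, Finset.card_image_of_injective _ Prod.swap_injective]
  -- S1 ⊔ S2 = K.offDiag
  have hdisj' : Disjoint S1 S2 := by
    rw [Finset.disjoint_left]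
    intro p hp hp'
    simp only [hS1, hS2, Finset.mem_filter] at hp hp'
    have hadj : G.Adj p.1 p.2 := D.adj_of_dir _ _ hp.2.2.2
    exact ((D.dir_iff _ _ hadj).mp hp.2.2.2) hp'.2.2.2
  have hoff : S1 ∪ S2 = K.offDiag := by
    ext ⟨a, b⟩
    simp only [hS1, hS2, Finset.mem_union, Finset.mem_filter, Finset.mem_univ, true_and,
      Finset.mem_offDiag]
    constructor
    · rintro (⟨ha, hb, hd⟩ | ⟨ha, hb, hd⟩)
      · exact ⟨ha, hb, (D.adj_of_dir _ _ hd).ne⟩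
      · exact ⟨ha, hb, (D.adj_of_dir _ _ hd).symm.ne⟩
    · rintro ⟨ha, hb, hne⟩
      have hadj : G.Adj a b := hclique ha hb hne
      by_cases hd : D.dir a b = true
      · exact Or.inl ⟨ha, hb, hd⟩
      · exact Or.inr ⟨ha, hb, (D.dir_iff b a hadj.symm).mpr hd⟩
  have h2'' : 2 * S1.card + ω = ω * ω := by
    have h : S1.card + S2.card = K.offDiag.card := by
      rw [← hoff, Finset.card_union_of_disjoint hdisj']
    rw [Finset.offDiag_card, hcard] at h
    have hle : ω ≤ ω * ω := by nlinarith
    omega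
  -- now put everything together in ℤ
  have key : (ℓS.card : ℤ) + (S1.card : ℤ) ≤ (k : ℤ) * (ω : ℤ) := by
    have h := hsum_le
    rw [← hPsum, hPcard] at h
    exact_mod_cast h
  have hωω : (ω : ℤ) * ((ω : ℤ) - 1) = 2 * (S1.card : ℤ) := by
    have h := h2''
    have hc : (2 * S1.card + ω : ℤ) = (ω : ℤ) * (ω : ℤ) := by exact_mod_cast congrArg (Nat.cast : ℕ → ℤ) h
    ring_nf
    ring_nf at hc
    linarith
  rw [hωω]
  have h22 : (2 : ℤ) * (S1.card : ℤ) / 2 = (S1.card : ℤ) :=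
    Int.mul_ediv_cancel_left _ two_ne_zero
  rw [h22]
  linarith
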